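/- Let σ = (a₀,…,a_{n}) be an open simplex with barycenter σ̂, let τ be an open simplex contained in the frontier ∂σ, and let φ : closure(τ) → ∂σ be a continuous injective map. Then the map h : [τ, σ̂] → closure(σ) defined on the cone [τ,σ̂] = {(1−t)u + t·σ̂ : u ∈ closure(τ), t ∈ [0,1]} by h((1−t)u + t·σ̂) = (1−t)φ(u) + t·σ̂ is well-defined, continuous, and injective, with image contained in closure(σ). -/

import Mathlib

/-- The open simplex spanned by the points `a 0, …, a n`. -/
def openSimplex {m n : ℕ} (a : Fin (n + 1) → (Fin m → ℝ)) : Set (Fin m → ℝ) :=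
  {x | ∃ t : Fin (n + 1) → ℝ, (∀ i, 0 < t i) ∧ ∑ i, t i = 1 ∧ ∑ i, t i • a i = x}

/-- The open simplex spanned by a finite set `V` of points. -/
def openSimplexOf {m : ℕ} (V : Finset (Fin m → ℝ)) : Set (Fin m → ℝ) :=
  {x | ∃ w : (Fin m → ℝ) → ℝ, (∀ v ∈ V, 0 < w v) ∧
    ∑ v ∈ V, w v = 1 ∧ ∑ v ∈ V, w v • v = x}

/-- The closed simplex spanned by `a 0, …, a n`. -/
def closedSimplex {m n : ℕ} (a : Fin (n + 1) → (Fin m → ℝ)) : Set (Fin m → ℝ) :=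
  {x | ∃ t : Fin (n + 1) → ℝ, (∀ i, 0 ≤ t i) ∧ ∑ i, t i = 1 ∧ ∑ i, t i • a i = x}

theorem aux_exists_coord {m n : ℕ} (a : Fin (n + 1) → (Fin m → ℝ))
    (ha : AffineIndependent ℝ a) :
    ∃ c : (Fin m → ℝ) → (Fin (n + 1) → ℝ), Continuous c ∧
      ∀ t : Fin (n + 1) → ℝ, ∑ i, t i = 1 → c (∑ i, t i • a i) = t := by
  let L : (Fin (n + 1) → ℝ) →ₗ[ℝ] ((Fin m → ℝ) × ℝ) :=
    { toFun := fun t => (∑ i, t i • a i, ∑ i, t i)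
      map_add' := fun x y => by
        simp [Prod.ext_iff, add_smul, Finset.sum_add_distrib]
      map_smul' := fun r x => by
        simp [Prod.ext_iff, smul_smul, Finset.smul_sum, Finset.mul_sum] }
  have hker : LinearMap.ker L = ⊥ := by
    rw [LinearMap.ker_eq_bot']
    intro t ht
    have h1 : ∑ i, t i • a i = 0 ∧ ∑ i, t i = 0 := by
      simpa [L, Prod.ext_iff] using ht
    funext i
    exact affineIndependent_iff.1 ha Finset.univ t h1.2 h1.1 i (Finset.mem_univ i)
  obtain ⟨g, hg⟩ := L.exists_leftInverse_of_injective hker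
  refine ⟨fun x => g (x, 1), ?_, ?_⟩
  · exact g.continuous_of_finiteDimensional.comp (continuous_id.prodMk continuous_const)
  · intro t hts
    have h2 : g (L t) = t := by rw [← LinearMap.comp_apply, hg]; rfl
    simpa [L, hts] using h2

theorem aux_isCompact_closedSimplex {m n : ℕ} (a : Fin (n + 1) → (Fin m → ℝ)) :
    IsCompact (closedSimplex a) := by
  have himg : closedSimplex a
      = (fun t : Fin (n + 1) → ℝ => ∑ i, t i • a i) '' stdSimplex ℝ (Fin (n + 1)) := by
    ext x
    constructor
    · rintro ⟨t, h0, h1, h2⟩; exact ⟨t, ⟨h0, h1⟩, h2⟩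
    · rintro ⟨t, ⟨h0, h1⟩, h2⟩; exact ⟨t, h0, h1, h2⟩
  rw [himg]
  exact (isCompact_stdSimplex ℝ _).image
    (continuous_finset_sum _ fun i _ => (continuous_apply i).smul continuous_const)

theorem aux_convex_closedSimplex {m n : ℕ} (a : Fin (n + 1) → (Fin m → ℝ)) :
    Convex ℝ (closedSimplex a) := by
  rintro x ⟨s, hs0, hs1, hs2⟩ y ⟨t, ht0, ht1, ht2⟩ α β hα hβ hαβ
  refine ⟨fun i => α * s i + β * t i,
    fun i => add_nonneg (mul_nonneg hα (hs0 i)) (mul_nonneg hβ (ht0 i)), ?_, ?_⟩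
  · simp [Finset.sum_add_distrib, ← Finset.mul_sum, hs1, ht1, hαβ]
  · simp only [add_smul, mul_smul, Finset.sum_add_distrib, ← Finset.smul_sum, hs2, ht2]

theorem aux_sum_inv_card {n : ℕ} : ∑ _i : Fin (n+1), ((n:ℝ)+1)⁻¹ = 1 := by
  rw [Finset.sum_const, Finset.card_univ, Fintype.card_fin, nsmul_eq_mul]
  push_cast
  rw [mul_inv_cancel₀]
  positivity

theorem aux_closure_openSimplex {m n : ℕ} (a : Fin (n + 1) → (Fin m → ℝ)) :
    closure (openSimplex a) = closedSimplex a := by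
  apply le_antisymm
  · apply closure_minimal _ (aux_isCompact_closedSimplex a).isClosed
    rintro x ⟨t, h0, h1, h2⟩
    exact ⟨t, fun i => (h0 i).le, h1, h2⟩
  · rintro x ⟨t, h0, h1, h2⟩
    have key : Filter.Tendsto (fun ε : ℝ => ∑ i, ((1 - ε) * t i + ε * ((n:ℝ)+1)⁻¹) • a i)
        (nhdsWithin 0 (Set.Ioi 0)) (nhds x) := by
      have hcont : Continuous (fun ε : ℝ => ∑ i, ((1 - ε) * t i + ε * ((n:ℝ)+1)⁻¹) • a i) := by
        fun_prop
      have h3 := hcont.tendsto 0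
      simp only [sub_zero, one_mul, zero_mul, add_zero] at h3
      rw [h2] at h3
      exact h3.mono_left nhdsWithin_le_nhds
    refine mem_closure_of_tendsto key ?_
    filter_upwards [Ioo_mem_nhdsGT_of_mem (Set.left_mem_Ico.2 one_pos)] with ε hε
    refine ⟨_, fun i => ?_, ?_, rfl⟩
    · have ha1 : 0 ≤ (1 - ε) * t i := mul_nonneg (by linarith [hε.2]) (h0 i)
      have ha2 : 0 < ε * ((n:ℝ)+1)⁻¹ := mul_pos hε.1 (by positivity)
      linarith
    · rw [Finset.sum_add_distrib, ← Finset.mul_sum, ← Finset.mul_sum, h1, aux_sum_inv_card]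
      ring

theorem stmt_9 (m n : ℕ) (hn : 1 ≤ n) (a : Fin (n + 1) → (Fin m → ℝ))
    (ha : AffineIndependent ℝ a)
    (bary : Fin m → ℝ) (hbary : bary = ((n : ℝ) + 1)⁻¹ • ∑ i, a i)
    (bdry : Set (Fin m → ℝ)) (hbdry : bdry = closure (openSimplex a) \ openSimplex a)
    (V : Finset (Fin m → ℝ)) (hV : V.Nonempty)
    (hVindep : AffineIndependent ℝ (fun v : {x // x ∈ V} => (v : Fin m → ℝ)))
    (τ : Set (Fin m → ℝ)) (hτ : τ = openSimplexOf V)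
    (hτbdry : closure τ ⊆ bdry)
    (φ : (Fin m → ℝ) → (Fin m → ℝ))
    (hφc : ContinuousOn φ (closure τ)) (hφi : Set.InjOn φ (closure τ))
    (hφb : ∀ u ∈ closure τ, φ u ∈ bdry)
    (cone : Set (Fin m → ℝ))
    (hcone : cone = {p | ∃ u ∈ closure τ, ∃ t ∈ Set.Icc (0:ℝ) 1,
      p = (1 - t) • u + t • bary}) :
    ∃ h : (Fin m → ℝ) → (Fin m → ℝ),
      (∀ u ∈ closure τ, ∀ t ∈ Set.Icc (0:ℝ) 1,
        h ((1 - t) • u + t • bary) = (1 - t) • φ u + t • bary) ∧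
      ContinuousOn h cone ∧
      Set.InjOn h cone ∧
      (∀ p ∈ cone, h p ∈ closure (openSimplex a)) := by
  classical
  obtain ⟨c, hc, hcs⟩ := aux_exists_coord a ha
  have hbary_sum : bary = ∑ i, ((n:ℝ)+1)⁻¹ • a i := by rw [hbary, Finset.smul_sum]
  have hbaryC : bary ∈ closedSimplex a :=
    ⟨fun _ => ((n:ℝ)+1)⁻¹, fun i => by positivity, aux_sum_inv_card, hbary_sum.symm⟩
  have hcoord : ∀ x ∈ closedSimplex a,
      (∀ i, 0 ≤ c x i) ∧ (∑ i, c x i = 1) ∧ ∑ i, c x i • a i = x := by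
    rintro x ⟨t, h0, h1, h2⟩
    have hce : c x = t := by rw [← h2]; exact hcs t h1
    rw [hce]; exact ⟨h0, h1, h2⟩
  have hmemS : ∀ x ∈ closedSimplex a, (∀ i, 0 < c x i) → x ∈ openSimplex a := by
    intro x hx hpos
    exact ⟨c x, hpos, (hcoord x hx).2.1, (hcoord x hx).2.2⟩
  have hbdryC : bdry ⊆ closedSimplex a := by
    rw [hbdry, aux_closure_openSimplex]; exact Set.diff_subset
  have hne : (Finset.univ : Finset (Fin (n+1))).Nonempty := Finset.univ_nonempty
  set minc : (Fin m → ℝ) → ℝ := fun x => Finset.univ.inf' hne (fun i => c x i) with hminc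
  have hbdry0 : ∀ x ∈ bdry, minc x = 0 := by
    intro x hx
    have hxC := hbdryC hx
    have hxnS : x ∉ openSimplex a := by rw [hbdry] at hx; exact hx.2
    have hex : ∃ i, c x i ≤ 0 := by
      by_contra hcon
      push_neg at hcon
      exact hxnS (hmemS x hxC hcon)
    obtain ⟨i, hi⟩ := hex
    have hle : minc x ≤ 0 := le_trans (Finset.inf'_le _ (Finset.mem_univ i)) hi
    have hge : 0 ≤ minc x := Finset.le_inf' _ _ (fun j _ => (hcoord x hxC).1 j)
    linarith
  set T : (Fin m → ℝ) → ℝ := fun x => ((n:ℝ)+1) * minc x with hTdef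
  have hTcont : Continuous T := continuous_const.mul
    (Continuous.finset_inf'_apply hne (fun i _ => (continuous_apply i).comp hc))
  have hn1 : ((n:ℝ)+1) ≠ 0 := by positivity
  -- key coordinate computation
  have hkey : ∀ u ∈ bdry, ∀ t ∈ Set.Icc (0:ℝ) 1,
      c ((1 - t) • u + t • bary) = fun i => (1 - t) * c u i + t * ((n:ℝ)+1)⁻¹ := by
    intro u hu t ht
    obtain ⟨h0, h1, h2⟩ := hcoord u (hbdryC hu)
    have hs : ∑ i, ((1 - t) * c u i + t * ((n:ℝ)+1)⁻¹) = 1 := by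
      rw [Finset.sum_add_distrib, ← Finset.mul_sum, ← Finset.mul_sum, h1, aux_sum_inv_card]
      ring
    have hv : ∑ i, ((1 - t) * c u i + t * ((n:ℝ)+1)⁻¹) • a i = (1 - t) • u + t • bary := by
      simp only [add_smul, mul_smul, Finset.sum_add_distrib, ← Finset.smul_sum, h2, ← hbary_sum]
    rw [← hv, hcs _ hs]
  have hTval : ∀ u ∈ bdry, ∀ t ∈ Set.Icc (0:ℝ) 1, T ((1 - t) • u + t • bary) = t := by
    intro u hu t ht
    have hk := hkey u hu t ht
    have h1t : 0 ≤ 1 - t := by linarith [ht.2]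
    have hmono : ∀ x y : ℝ, (fun y => (1 - t) * y + t * ((n:ℝ)+1)⁻¹) (x ⊓ y)
        = (fun y => (1 - t) * y + t * ((n:ℝ)+1)⁻¹) x ⊓ (fun y => (1 - t) * y + t * ((n:ℝ)+1)⁻¹) y := by
      intro x y
      rcases le_total x y with hxy | hxy
      · rw [inf_eq_left.2 hxy, inf_eq_left.2 (by nlinarith : (1-t)*x + t*((n:ℝ)+1)⁻¹ ≤ (1-t)*y + t*((n:ℝ)+1)⁻¹)]
      · rw [inf_eq_right.2 hxy, inf_eq_right.2 (by nlinarith : (1-t)*y + t*((n:ℝ)+1)⁻¹ ≤ (1-t)*x + t*((n:ℝ)+1)⁻¹)]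
    have hinf := Finset.apply_inf'_eq_inf'_comp hne (f := fun i => c u i)
      (fun y => (1 - t) * y + t * ((n:ℝ)+1)⁻¹) hmono
    have hmv : minc ((1 - t) • u + t • bary) = (1 - t) * minc u + t * ((n:ℝ)+1)⁻¹ := by
      rw [hminc]
      simp only [hk]
      exact hinf.symm
    rw [hTdef]
    simp only [hmv, hbdry0 u hu]
    field_simp
    ring
  have hUrec : ∀ (u : Fin m → ℝ) (t : ℝ), t < 1 →
      (1 - t)⁻¹ • (((1 - t) • u + t • bary) - t • bary) = u := by
    intro u t htlt
    have h1t : (1 - t) ≠ 0 := sub_ne_zero.2 (by linarith)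
    rw [add_sub_cancel_right, smul_smul, inv_mul_cancel₀ h1t, one_smul]
  set U : (Fin m → ℝ) → (Fin m → ℝ) := fun p => (1 - T p)⁻¹ • (p - T p • bary) with hUdef
  set h : (Fin m → ℝ) → (Fin m → ℝ) := fun p => (1 - T p) • φ (U p) + T p • bary with hhdef
  have hwd : ∀ u ∈ closure τ, ∀ t ∈ Set.Icc (0:ℝ) 1,
      h ((1 - t) • u + t • bary) = (1 - t) • φ u + t • bary := by
    intro u hu t ht
    have hTp := hTval u (hτbdry hu) t ht
    rcases eq_or_lt_of_le ht.2 with h1 | h1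
    · subst h1
      rw [hhdef]
      simp only [hTp]
      norm_num
    · have hUp : U ((1 - t) • u + t • bary) = u := by
        rw [hUdef]
        simp only [hTp]
        exact hUrec u t h1
      rw [hhdef]
      simp only [hUp, hTp]
  have hrep : ∀ p ∈ cone, ∃ u ∈ closure τ, ∃ t ∈ Set.Icc (0:ℝ) 1,
      p = (1 - t) • u + t • bary ∧ T p = t := by
    intro p hp
    rw [hcone] at hp
    obtain ⟨u, hu, t, ht, hpe⟩ := hp
    exact ⟨u, hu, t, ht, hpe, by rw [hpe]; exact hTval u (hτbdry hu) t ht⟩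
  have hUmap : ∀ q ∈ cone, T q < 1 → U q ∈ closure τ := by
    intro q hq hlt
    obtain ⟨u, hu, t, ht, hqe, hTq⟩ := hrep q hq
    have ht1 : t < 1 := by rw [hTq] at hlt; exact hlt
    have hUq : U q = u := by
      rw [hUdef]
      show (1 - T q)⁻¹ • (q - T q • bary) = u
      rw [hTq, hqe]
      exact hUrec u t ht1
    rw [hUq]; exact hu
  have hcont : ContinuousOn h cone := by
    intro p hp
    obtain ⟨u, hu, t, ht, hpe, hTp⟩ := hrep p hp
    rcases eq_or_lt_of_le ht.2 with h1 | h1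
    · -- t = 1 : p = bary, squeeze argument
      subst h1
      have hpb : p = bary := by rw [hpe]; norm_num
      have hhb : h bary = bary := by
        have hw := hwd u hu 1 ⟨zero_le_one, le_refl 1⟩
        norm_num at hw
        exact hw
      have hTb : T bary = 1 := by rw [← hpb]; exact hTp
      rw [hpb]
      obtain ⟨R, hR⟩ := isBounded_iff_forall_norm_le.1 (aux_isCompact_closedSimplex a).isBounded
      have hRb : ‖bary‖ ≤ R := hR bary hbaryC
      unfold ContinuousWithinAt
      rw [hhb, tendsto_iff_norm_sub_tendsto_zero]
      apply squeeze_zero' (Filter.Eventually.of_forall fun q => norm_nonneg _)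
        (g := fun q => |1 - T q| * (2*R))
      · filter_upwards [self_mem_nhdsWithin] with q hq
        obtain ⟨u', hu', t', ht', hqe, hTq⟩ := hrep q hq
        have hhq : h q = (1 - t') • φ u' + t' • bary := by rw [hqe]; exact hwd u' hu' t' ht'
        have hsub : h q - bary = (1 - t') • (φ u' - bary) := by
          rw [hhq]; module
        rw [hsub, norm_smul]
        have hnorm : ‖φ u' - bary‖ ≤ 2*R := by
          have hb1 : ‖φ u'‖ ≤ R := hR _ (hbdryC (hφb u' hu'))
          calc ‖φ u' - bary‖ ≤ ‖φ u'‖ + ‖bary‖ := norm_sub_le _ _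
            _ ≤ 2*R := by linarith
        rw [Real.norm_eq_abs, ← hTq]
        exact mul_le_mul_of_nonneg_left hnorm (abs_nonneg _)
      · have hg : Filter.Tendsto (fun q => |1 - T q| * (2*R)) (nhds bary)
            (nhds (|1 - T bary| * (2*R))) :=
          (((continuous_const.sub hTcont).abs).mul continuous_const).tendsto bary
        rw [hTb] at hg
        norm_num at hg
        exact hg.mono_left nhdsWithin_le_nhds
    · -- t < 1 : plain composition
      have hT1 : T p ≠ 1 := by rw [hTp]; exact ne_of_lt h1
      have hTplt : T p < 1 := by rw [hTp]; exact h1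
      have hW : {q | T q < 1} ∈ nhds p :=
        (isOpen_lt hTcont continuous_const).mem_nhds hTplt
      rw [← continuousWithinAt_inter hW]
      rw [hhdef]
      apply ContinuousWithinAt.add
      · apply ContinuousWithinAt.smul (f := fun p => 1 - T p) (g := fun p => φ (U p))
        · exact ((continuous_const.sub hTcont).continuousAt).continuousWithinAt
        · have hUp : U p ∈ closure τ := hUmap p hp hTplt
          have hUca : ContinuousAt U p := by
            rw [hUdef]
            exact (((continuous_const.sub hTcont).continuousAt).inv₀
              (sub_ne_zero.2 (Ne.symm hT1))).smul
              ((continuous_id.sub (hTcont.smul continuous_const)).continuousAt)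
          exact ContinuousWithinAt.comp (hφc (U p) hUp) hUca.continuousWithinAt
            (fun q hq => hUmap q hq.1 hq.2)
      · exact ((hTcont.smul continuous_const).continuousAt).continuousWithinAt
  have hinj : Set.InjOn h cone := by
    intro p hp q hq hpq
    obtain ⟨u, hu, t, ht, hpe, hTp⟩ := hrep p hp
    obtain ⟨u', hu', t', ht', hqe, hTq⟩ := hrep q hq
    have hhp : h p = (1 - t) • φ u + t • bary := by rw [hpe]; exact hwd u hu t ht
    have hhq : h q = (1 - t') • φ u' + t' • bary := by rw [hqe]; exact hwd u' hu' t' ht'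
    have hthp : T (h p) = t := by rw [hhp]; exact hTval (φ u) (hφb u hu) t ht
    have hthq : T (h q) = t' := by rw [hhq]; exact hTval (φ u') (hφb u' hu') t' ht'
    have htt : t = t' := by rw [← hthp, ← hthq, hpq]
    subst htt
    rcases eq_or_lt_of_le ht.2 with h1 | h1
    · subst h1
      rw [hpe, hqe]
      norm_num
    · have hne1 : (1 - t) ≠ 0 := sub_ne_zero.2 (by linarith)
      have hφeq : φ u = φ u' := by
        rw [hhp, hhq] at hpq
        have h2 : (1 - t) • φ u = (1 - t) • φ u' := add_right_cancel hpq
        exact smul_right_injective _ hne1 h2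
      have huu : u = u' := hφi hu hu' hφeq
      rw [hpe, hqe, huu]
  refine ⟨h, hwd, hcont, hinj, ?_⟩
  intro p hp
  obtain ⟨u, hu, t, ht, hpe, hTp⟩ := hrep p hp
  have hhp : h p = (1 - t) • φ u + t • bary := by rw [hpe]; exact hwd u hu t ht
  rw [aux_closure_openSimplex, hhp]
  exact aux_convex_closedSimplex a (hbdryC (hφb u hu)) hbaryC
    (by linarith [ht.2]) ht.1 (by ring)
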